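/- Let X be a second countable locally compact Hausdorff abelian topological group, let b1, b2, b3 : X → X be continuous endomorphisms, let x0 ∈ X with x0 ≠ 0 and b1 x0 = b2 x0, let a > 0, and let μ be an arbitrary Borel probability measure on X. Set μ1 = μ2 = e(2a E_{x0}), ν1 = e(a E_{x0}), ν2 = e(3a E_{x0}), and μ3 = ν3 = μ. Let T : X³ → X² be T(x1, x2, x3) = (x1 + x2 + x3, b1 x1 + b2 x2 + b3 x3). Then the pushforward of μ1 ⊗ μ2 ⊗ μ3 under T equals the pushforward of ν1 ⊗ ν2 ⊗ ν3 under T, yet there is no x ∈ X with ν1 = μ1 ∗ E_x. (Hence the kernel conditions Ker(b_i − b_j) = {0} cannot be omitted from the group-theoretic analogue of C.R. Rao's theorem.) -/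

import Mathlib

open MeasureTheory

/-- The Poisson distribution `e(λ E_{x₀}) = e^{-λ} ∑ₙ (λⁿ/n!) E_{n x₀}` on a
group `X`. -/
noncomputable def poissonMeasure {X : Type*} [AddCommMonoid X] [MeasurableSpace X]
    (lam : ℝ) (x₀ : X) : Measure X :=
  Measure.sum fun n : ℕ =>
    ENNReal.ofReal (Real.exp (-lam) * lam ^ n / n.factorial) • Measure.dirac (n • x₀)

open MeasureTheory.Measure
open scoped ENNReal

set_option maxHeartbeats 2000000

namespace PoissonCE

/-- Poisson coefficient. -/
noncomputable def pc (lam : ℝ) (n : ℕ) : ℝ := Real.exp (-lam) * lam ^ n / n.factorial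

lemma pc_pos {lam : ℝ} (h : 0 < lam) (n : ℕ) : 0 < pc lam n := by
  unfold pc; positivity

lemma pc_nonneg {lam : ℝ} (h : 0 ≤ lam) (n : ℕ) : 0 ≤ pc lam n := by
  unfold pc; positivity

lemma pc_summable (lam : ℝ) : Summable (pc lam) := by
  unfold pc
  simpa [mul_div_assoc] using (Real.summable_pow_div_factorial lam).mul_left (Real.exp (-lam))

lemma pc_tsum (lam : ℝ) : ∑' n, pc lam n = 1 := by
  unfold pc
  simp_rw [mul_div_assoc]
  rw [tsum_mul_left]
  have h : ∑' n : ℕ, lam ^ n / n.factorial = Real.exp lam := by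
    rw [Real.exp_eq_exp_ℝ, NormedSpace.exp_eq_tsum_div]
  rw [h, ← Real.exp_add]
  simp

/-- A countable weighted sum of Dirac measures. -/
noncomputable def sdm {ι α : Type*} [MeasurableSpace α] (c : ι → ℝ) (z : ι → α) : Measure α :=
  Measure.sum fun i => ENNReal.ofReal (c i) • Measure.dirac (z i)

instance sdm_sfinite {ι α : Type*} [Countable ι] [MeasurableSpace α] (c : ι → ℝ) (z : ι → α) :
    SFinite (sdm c z) := by
  have : ∀ i, IsFiniteMeasure (ENNReal.ofReal (c i) • Measure.dirac (z i)) :=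
    fun i => (Measure.dirac (z i)).smul_finite ENNReal.ofReal_ne_top
  unfold sdm
  infer_instance

lemma poissonMeasure_eq_sdm {X : Type*} [AddCommMonoid X] [MeasurableSpace X]
    (lam : ℝ) (x₀ : X) : poissonMeasure lam x₀ = sdm (pc lam) (fun n => n • x₀) := rfl

lemma map_sdm {ι α β : Type*} [MeasurableSpace α] [MeasurableSpace β]
    (c : ι → ℝ) (z : ι → α) {f : α → β} (hf : Measurable f) :
    (sdm c z).map f = sdm c (f ∘ z) := by
  unfold sdm
  rw [Measure.map_sum hf.aemeasurable]
  congr 1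
  funext i
  rw [Measure.map_smul, Measure.map_dirac' hf]
  rfl

lemma sdm_apply_singleton {ι α : Type*} [Countable ι] [MeasurableSpace α] [DecidableEq α]
    [MeasurableSingletonClass α] (c : ι → ℝ) (z : ι → α) (y : α) :
    sdm c z {y} = ∑' i, if z i = y then ENNReal.ofReal (c i) else 0 := by
  unfold sdm
  rw [Measure.sum_apply _ (measurableSet_singleton y)]
  refine tsum_congr fun i => ?_
  rw [Measure.smul_apply, Measure.dirac_apply' _ (measurableSet_singleton y),
    smul_eq_mul, Set.indicator_apply]
  simp [Set.mem_singleton_iff, mul_ite, eq_comm]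

lemma sdm_univ {ι α : Type*} [Countable ι] [MeasurableSpace α] (c : ι → ℝ) (z : ι → α) :
    sdm c z Set.univ = ∑' i, ENNReal.ofReal (c i) := by
  unfold sdm
  rw [Measure.sum_apply _ MeasurableSet.univ]
  simp

/-- The Poisson measure on ℕ. -/
noncomputable def pois (lam : ℝ) : Measure ℕ := sdm (pc lam) id

instance pois_sfinite (lam : ℝ) : SFinite (pois lam) := sdm_sfinite _ _

instance pois_prob {lam : ℝ} [Fact (0 ≤ lam)] : IsProbabilityMeasure (pois lam) := by
  constructor
  rw [pois, sdm_univ, ← ENNReal.ofReal_tsum_of_nonneg (pc_nonneg (Fact.out)) (pc_summable lam),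
    pc_tsum]
  simp

lemma poissonMeasure_eq_map {X : Type*} [AddCommMonoid X] [MeasurableSpace X]
    [MeasurableSingletonClass X] (lam : ℝ) (x₀ : X) :
    poissonMeasure lam x₀ = (pois lam).map (fun n : ℕ => n • x₀) := by
  rw [pois, map_sdm _ _ (measurable_of_countable _), poissonMeasure_eq_sdm]
  rfl


lemma smul_dirac_prod_smul_dirac {α β : Type*} [MeasurableSpace α] [MeasurableSpace β]
    (e f : ℝ≥0∞) (he : e ≠ ⊤) (hf : f ≠ ⊤) (x : α) (y : β) :
    (e • Measure.dirac x).prod (f • Measure.dirac y) = (e * f) • Measure.dirac (x, y) := by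
  haveI : IsFiniteMeasure (e • Measure.dirac x) := (Measure.dirac x).smul_finite he
  haveI : IsFiniteMeasure (f • Measure.dirac y) := (Measure.dirac y).smul_finite hf
  refine Measure.prod_eq fun s t hs ht => ?_
  rw [Measure.smul_apply, Measure.smul_apply, Measure.smul_apply,
    Measure.dirac_apply' _ (hs.prod ht), Measure.dirac_apply' _ hs, Measure.dirac_apply' _ ht]
  by_cases hx : x ∈ s <;> by_cases hy : y ∈ t <;>
    simp [Set.indicator_apply, Set.mem_prod, hx, hy, mul_assoc, mul_comm, mul_left_comm]

lemma sdm_prod {ι ι' α β : Type*} [Countable ι] [Countable ι']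
    [MeasurableSpace α] [MeasurableSpace β]
    (c : ι → ℝ) (d : ι' → ℝ) (hc : ∀ i, 0 ≤ c i) (z : ι → α) (w : ι' → β) :
    (sdm c z).prod (sdm d w) =
      sdm (fun p : ι × ι' => c p.1 * d p.2) (fun p => (z p.1, w p.2)) := by
  unfold sdm
  haveI : ∀ i, SFinite (ENNReal.ofReal (d i) • Measure.dirac (w i)) := fun i =>
    haveI : IsFiniteMeasure (ENNReal.ofReal (d i) • Measure.dirac (w i)) :=
      (Measure.dirac (w i)).smul_finite ENNReal.ofReal_ne_top
    inferInstance
  rw [Measure.prod_sum]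
  congr 1
  funext p
  rw [smul_dirac_prod_smul_dirac _ _ ENNReal.ofReal_ne_top ENNReal.ofReal_ne_top,
    ENNReal.ofReal_mul (hc p.1)]

lemma pc_binomial {r s : ℝ} (hr : 0 ≤ r) (hs : 0 ≤ s) (k : ℕ) :
    ∑ m ∈ Finset.range (k + 1), pc r m * pc s (k - m) = pc (r + s) k := by
  have h1 : ∀ m ∈ Finset.range (k + 1), pc r m * pc s (k - m) =
      (Real.exp (-(r + s)) / k.factorial) * (r ^ m * s ^ (k - m) * (k.choose m : ℝ)) := by
    intro m hm
    have hmk : m ≤ k := Nat.lt_succ_iff.mp (Finset.mem_range.mp hm)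
    have hfact : ((k.choose m : ℝ) * m.factorial * (k - m).factorial : ℝ) = k.factorial := by
      exact_mod_cast congrArg (Nat.cast (R := ℝ))
        (Nat.choose_mul_factorial_mul_factorial hmk)
    have hm0 : (m.factorial : ℝ) ≠ 0 := Nat.cast_ne_zero.mpr m.factorial_ne_zero
    have hk0 : ((k - m).factorial : ℝ) ≠ 0 := Nat.cast_ne_zero.mpr (k - m).factorial_ne_zero
    have hkf : (k.factorial : ℝ) ≠ 0 := Nat.cast_ne_zero.mpr k.factorial_ne_zero
    unfold pc
    rw [neg_add, Real.exp_add]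
    field_simp
    rw [← hfact]
    ring
  rw [Finset.sum_congr rfl h1, ← Finset.mul_sum]
  have h2 : ∑ m ∈ Finset.range (k + 1), r ^ m * s ^ (k - m) * (k.choose m : ℝ) = (r + s) ^ k :=
    (add_pow r s k).symm
  rw [h2]
  unfold pc
  ring

lemma pois_conv {r s : ℝ} (hr : 0 ≤ r) (hs : 0 ≤ s) :
    ((pois r).prod (pois s)).map (fun p : ℕ × ℕ => p.1 + p.2) = pois (r + s) := by
  unfold pois
  rw [sdm_prod _ _ (pc_nonneg hr) _ _, map_sdm _ _ (measurable_of_countable _)]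
  apply Measure.ext_of_singleton
  intro k
  rw [sdm_apply_singleton, sdm_apply_singleton]
  simp only [Function.comp_def, id]
  have hRHS : (∑' n : ℕ, if n = k then ENNReal.ofReal (pc (r + s) n) else 0) =
      ENNReal.ofReal (pc (r + s) k) := by
    rw [tsum_eq_single k (fun n hn => if_neg hn)]
    simp
  rw [hRHS, ENNReal.tsum_prod']
  have hinner : ∀ m : ℕ, (∑' n : ℕ,
      if m + n = k then ENNReal.ofReal (pc r m * pc s n) else 0) =
      if m ≤ k then ENNReal.ofReal (pc r m * pc s (k - m)) else 0 := by
    intro m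
    by_cases hm : m ≤ k
    · rw [tsum_eq_single (k - m) (fun n hn => if_neg (by omega)), if_pos (by omega), if_pos hm]
    · rw [if_neg hm]
      exact ENNReal.tsum_eq_zero.mpr fun n => if_neg (by omega)
  rw [tsum_congr hinner,
    tsum_eq_sum (s := Finset.range (k + 1)) (fun m hm => if_neg (by simp at hm; omega))]
  rw [Finset.sum_congr rfl (fun m hm => if_pos (by simp at hm; omega)),
    ← ENNReal.ofReal_sum_of_nonneg
      (fun m hm => mul_nonneg (pc_nonneg hr m) (pc_nonneg hs _)),
    pc_binomial hr hs k]

end PoissonCE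

open PoissonCE

/-- Counterexample showing that the kernel conditions cannot be omitted from the
Rao-type theorem: if `x₀ ≠ 0` and `b₁x₀ = b₂x₀`, then with
`μ₁ = μ₂ = e(2aE_{x₀})`, `ν₁ = e(aE_{x₀})`, `ν₂ = e(3aE_{x₀})`, `μ₃ = ν₃ = μ`,
the two pushforwards under `T` coincide, while `ν₁` is not a shift of `μ₁`. -/
theorem poisson_counterexample
    {X : Type*} [TopologicalSpace X] [AddCommGroup X] [IsTopologicalAddGroup X]
    [LocallyCompactSpace X] [T2Space X] [SecondCountableTopology X]
    [MeasurableSpace X] [BorelSpace X]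
    (b₁ b₂ b₃ : X →+ X) (hb₁ : Continuous b₁) (hb₂ : Continuous b₂) (hb₃ : Continuous b₃)
    (x₀ : X) (hx₀ : x₀ ≠ 0) (hbx₀ : b₁ x₀ = b₂ x₀)
    (a : ℝ) (ha : 0 < a)
    (μ : Measure X) [IsProbabilityMeasure μ]
    (μ₁ μ₂ μ₃ ν₁ ν₂ ν₃ : Measure X)
    (hμ₁ : μ₁ = poissonMeasure (2 * a) x₀) (hμ₂ : μ₂ = poissonMeasure (2 * a) x₀)
    (hν₁ : ν₁ = poissonMeasure a x₀) (hν₂ : ν₂ = poissonMeasure (3 * a) x₀)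
    (hμ₃ : μ₃ = μ) (hν₃ : ν₃ = μ)
    (T : X × X × X → X × X)
    (hT : T = fun q => (q.1 + q.2.1 + q.2.2, b₁ q.1 + b₂ q.2.1 + b₃ q.2.2)) :
    (μ₁.prod (μ₂.prod μ₃)).map T = (ν₁.prod (ν₂.prod ν₃)).map T ∧
      ¬∃ x : X, ν₁ = μ₁ ∗ Measure.dirac x := by
  have hTmeas : Measurable T := by
    rw [hT]
    exact (((continuous_fst.add (continuous_fst.comp continuous_snd)).add
      (continuous_snd.comp continuous_snd)).prodMk
      (((hb₁.comp continuous_fst).add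
        (hb₂.comp (continuous_fst.comp continuous_snd))).add
        (hb₃.comp (continuous_snd.comp continuous_snd)))).measurable
  set G : X × X → X × X := fun p => (p.1 + p.2, b₁ p.1 + b₂ p.2) with hG
  set H : X → X × X := fun x => (x, b₃ x) with hH
  set A : (X × X) × (X × X) → X × X := fun p => p.1 + p.2 with hA
  have hGmeas : Measurable G :=
    ((continuous_fst.add continuous_snd).prodMk
      ((hb₁.comp continuous_fst).add (hb₂.comp continuous_snd))).measurable
  have hHmeas : Measurable H := (continuous_id.prodMk hb₃).measurable
  have hAmeas : Measurable A := (continuous_fst.add continuous_snd).measurable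
  have hemeas : Measurable (fun n : ℕ => n • x₀) := measurable_of_countable _
  -- the key identity for the first two factors
  have hkey : (μ₁.prod μ₂).map G = (ν₁.prod ν₂).map G := by
    have hcomp : ∀ (r s : ℝ),
        ((poissonMeasure r x₀).prod (poissonMeasure s x₀)).map G =
          ((pois r).prod (pois s)).map
            ((fun k : ℕ => k • (x₀, b₁ x₀)) ∘ (fun p : ℕ × ℕ => p.1 + p.2)) := by
      intro r s
      rw [poissonMeasure_eq_map r x₀, poissonMeasure_eq_map s x₀,
        Measure.map_prod_map _ _ hemeas hemeas,
        Measure.map_map hGmeas (hemeas.prodMap hemeas)]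
      congr 1
      funext p
      show G (p.1 • x₀, p.2 • x₀) = (p.1 + p.2) • (x₀, b₁ x₀)
      rw [hG]
      ext
      · simp [add_nsmul]
      · simp [map_nsmul, hbx₀, add_nsmul]
    rw [hμ₁, hμ₂, hν₁, hν₂, hcomp, hcomp,
      ← Measure.map_map (measurable_of_countable _) (measurable_of_countable _),
      ← Measure.map_map (measurable_of_countable _) (measurable_of_countable _),
      pois_conv (by linarith) (by linarith), pois_conv (by linarith) (by linarith)]
    norm_num
    ring_nf
  -- reduction of the triple product to the pair
  have key : ∀ (κ κ' : Measure X), SFinite κ → SFinite κ' →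
      (κ.prod (κ'.prod μ)).map T = (((κ.prod κ').map G).prod (μ.map H)).map A := by
    intro κ κ' hκ hκ'
    rw [← Measure.prodAssoc_prod, Measure.map_map hTmeas MeasurableEquiv.prodAssoc.measurable,
      Measure.map_prod_map _ _ hGmeas hHmeas,
      Measure.map_map hAmeas (hGmeas.prodMap hHmeas)]
    congr 1
    funext q
    show T (MeasurableEquiv.prodAssoc q) = G q.1 + H q.2
    rw [hT, hG, hH]
    rfl
  have hsf : ∀ (r : ℝ), SFinite (poissonMeasure r x₀) := by
    intro r
    rw [poissonMeasure_eq_sdm]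
    infer_instance
  constructor
  · rw [hμ₃, hν₃,
      key μ₁ μ₂ (hμ₁ ▸ hsf _) (hμ₂ ▸ hsf _),
      key ν₁ ν₂ (hν₁ ▸ hsf _) (hν₂ ▸ hsf _), hkey]
  · rintro ⟨x, hx⟩
    classical
    -- convolution with a Dirac is translation
    have hconv : μ₁ ∗ Measure.dirac x = μ₁.map (· + x) := by
      have h1 : μ₁ ∗ Measure.dirac x =
          ((μ₁.prod (Measure.dirac x)).map fun p : X × X => p.1 + p.2) := rfl
      haveI : SFinite μ₁ := hμ₁ ▸ hsf _
      rw [h1, Measure.prod_dirac, Measure.map_map (g := fun p : X × X => p.1 + p.2)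
        (continuous_fst.add continuous_snd).measurable measurable_prodMk_right]
      rfl
    have h0 : poissonMeasure a x₀ = (poissonMeasure (2 * a) x₀).map (· + x) := by
      rw [← hν₁, ← hμ₁, hx, hconv]
    rw [poissonMeasure_eq_sdm, poissonMeasure_eq_sdm,
      map_sdm _ _ (measurable_add_const x)] at h0
    have h1 : ∀ y : X, (∑' n : ℕ, if n • x₀ = y then ENNReal.ofReal (pc a n) else 0)
        = ∑' n : ℕ, if n • x₀ + x = y then ENNReal.ofReal (pc (2 * a) n) else 0 := by
      intro y
      have h2 := congrArg (fun m : Measure X => m {y}) h0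
      rw [sdm_apply_singleton, sdm_apply_singleton] at h2
      simpa [Function.comp] using h2
    -- the shift x is a multiple of x₀
    have hx_mult : ∃ k : ℕ, k • x₀ = x := by
      by_contra hcon
      push_neg at hcon
      have h2 := h1 x
      rw [ENNReal.tsum_eq_zero.mpr (fun n => if_neg (hcon n))] at h2
      have h3 : (if (0 : ℕ) • x₀ + x = x then ENNReal.ofReal (pc (2 * a) 0) else 0)
          ≤ ∑' n : ℕ, if n • x₀ + x = x then ENNReal.ofReal (pc (2 * a) n) else 0 :=
        ENNReal.le_tsum 0
      rw [if_pos (by rw [zero_nsmul, zero_add]), ← h2] at h3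
      exact ne_of_gt (ENNReal.ofReal_pos.mpr (pc_pos (by linarith : (0:ℝ) < 2 * a) 0))
        (le_antisymm h3 (by positivity))
    obtain ⟨k, hk⟩ := hx_mult
    have h1' : ∀ y : X, (∑' n : ℕ, if n • x₀ = y then ENNReal.ofReal (pc a n) else 0)
        = ∑' n : ℕ, if (n + k) • x₀ = y then ENNReal.ofReal (pc (2 * a) n) else 0 := by
      intro y
      rw [h1 y]
      exact tsum_congr fun n => by rw [add_nsmul, hk]
    by_cases hinj : ∀ m n : ℕ, m • x₀ = n • x₀ → m = n
    · -- injective case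
      have e1 := h1' (k • x₀)
      rw [tsum_eq_single k (fun n hn => if_neg (fun h => hn (hinj n k h))), if_pos rfl,
        tsum_eq_single 0 (fun n hn => if_neg (fun h => hn (by
          have := hinj (n + k) k h; omega))),
        if_pos (by rw [zero_add])] at e1
      have e2 := h1' ((k + 1) • x₀)
      rw [tsum_eq_single (k + 1) (fun n hn => if_neg (fun h => hn (hinj n (k + 1) h))),
        if_pos rfl,
        tsum_eq_single 1 (fun n hn => if_neg (fun h => hn (by
          have := hinj (n + k) (k + 1) h; omega))),
        if_pos (by norm_num [add_comm])] at e2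
      have e1' : pc a k = pc (2 * a) 0 :=
        (ENNReal.ofReal_eq_ofReal_iff (pc_nonneg ha.le k) (pc_nonneg (by linarith) 0)).mp e1
      have e2' : pc a (k + 1) = pc (2 * a) 1 :=
        (ENNReal.ofReal_eq_ofReal_iff (pc_nonneg ha.le _) (pc_nonneg (by linarith) 1)).mp e2
      unfold pc at e1' e2'
      simp only [pow_zero, pow_one, Nat.factorial_zero, Nat.factorial_one, Nat.factorial_succ,
        Nat.cast_one, Nat.cast_mul, Nat.cast_add, pow_succ] at e1' e2'
      have hfac : (0 : ℝ) < k.factorial := by exact_mod_cast k.factorial_pos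
      have hexp1 : (0 : ℝ) < Real.exp (-a) := Real.exp_pos _
      have hexp2 : (0 : ℝ) < Real.exp (-(2 * a)) := Real.exp_pos _
      have hknn : (0 : ℝ) ≤ (k : ℝ) := Nat.cast_nonneg k
      have hfacne : (k.factorial : ℝ) ≠ 0 := ne_of_gt hfac
      field_simp at e1' e2'
      rw [show -(a * 2) = -(2 * a) by ring] at e1' e2'
      norm_num at e2'
      nlinarith [e1', e2', mul_pos hexp2 hfac, ha, hknn, mul_nonneg (mul_pos hexp2 hfac).le hknn,
        mul_pos (mul_pos hexp2 hfac) ha,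
        mul_nonneg (mul_pos (mul_pos hexp2 hfac) ha).le hknn]
    · -- torsion case
      push_neg at hinj
      have hqex : ∃ q : ℕ, 0 < q ∧ q • x₀ = 0 := by
        obtain ⟨m, n, hmn, hne⟩ := hinj
        have hgen : ∀ m n : ℕ, m < n → m • x₀ = n • x₀ → ∃ q : ℕ, 0 < q ∧ q • x₀ = 0 := by
          intro m n hlt hmn
          refine ⟨n - m, by omega, ?_⟩
          have h3 : (n - m) • x₀ + m • x₀ = m • x₀ := by
            rw [← add_nsmul, Nat.sub_add_cancel hlt.le, ← hmn]
          exact add_eq_right.mp h3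
        rcases lt_or_gt_of_ne hne with h | h
        · exact hgen m n h hmn
        · exact hgen n m h hmn.symm
      set q := Nat.find hqex with hqdef
      obtain ⟨hqpos, hqzero⟩ : 0 < q ∧ q • x₀ = 0 := Nat.find_spec hqex
      have hq2 : 2 ≤ q := by
        by_contra h
        push_neg at h
        have hq1 : q = 1 := by omega
        rw [hq1, one_nsmul] at hqzero
        exact hx₀ hqzero
      have hperiod : ∀ n : ℕ, n • x₀ = (n % q) • x₀ := by
        intro n
        have hsplit : (q * (n / q)) • x₀ = (n / q) • q • x₀ := by
          exact mul_nsmul x₀ q (n / q)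
        conv_lhs => rw [← Nat.mod_add_div n q]
        rw [add_nsmul, hsplit, hqzero, smul_zero, add_zero]
      have hdistinct : ∀ i j : ℕ, i < q → j < q → i • x₀ = j • x₀ → i = j := by
        have haux : ∀ i j : ℕ, i < j → j < q → i • x₀ = j • x₀ → False := by
          intro i j hij hj hijx
          have h3 : (j - i) • x₀ + i • x₀ = i • x₀ := by
            rw [← add_nsmul, Nat.sub_add_cancel hij.le, ← hijx]
          exact Nat.find_min hqex (show j - i < q by omega)
            ⟨by omega, add_eq_right.mp h3⟩
        intro i j hi hj hij
        rcases Nat.lt_trichotomy i j with h | h | h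
        · exact absurd hij fun hh => haux i j h hj hh
        · exact h
        · exact absurd hij.symm fun hh => haux j i h hi hh
      have hmod : ∀ (n j : ℕ), j < q → (n • x₀ = j • x₀ ↔ n % q = j) := by
        intro n j hj
        constructor
        · intro h
          exact hdistinct _ _ (Nat.mod_lt n hqpos) hj (by rw [← hperiod, h])
        · intro h
          rw [hperiod, h]
      -- real-valued singleton equalities
      have hsummable : ∀ (lam : ℝ), 0 ≤ lam → ∀ (P : ℕ → Prop) (_ : DecidablePred P),
          Summable (fun n => if P n then pc lam n else 0) := by
        intro lam hlam P _
        refine (pc_summable lam).of_nonneg_of_le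
          (fun n => by split <;> simp [pc_nonneg hlam]) (fun n => ?_)
        split
        · exact le_refl _
        · exact pc_nonneg hlam n
      have h2 : ∀ j : ℕ, j < q → (∑' n : ℕ, if n % q = j then pc a n else 0)
          = ∑' n : ℕ, if (n + k) % q = j then pc (2 * a) n else 0 := by
        intro j hj
        have h3 := h1' (j • x₀)
        rw [tsum_congr (fun n => if_congr (hmod n j hj) rfl rfl),
          tsum_congr (fun n => if_congr (hmod (n + k) j hj) rfl rfl)] at h3
        rw [tsum_congr (fun n : ℕ =>
            show (if n % q = j then ENNReal.ofReal (pc a n) else 0)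
              = ENNReal.ofReal (if n % q = j then pc a n else 0) by split <;> simp),
          tsum_congr (fun n : ℕ =>
            show (if (n + k) % q = j then ENNReal.ofReal (pc (2 * a) n) else 0)
              = ENNReal.ofReal (if (n + k) % q = j then pc (2 * a) n else 0) by
                split <;> simp),
          ← ENNReal.ofReal_tsum_of_nonneg
            (fun n => by split <;> simp [pc_nonneg ha.le])
            (hsummable a ha.le _ inferInstance),
          ← ENNReal.ofReal_tsum_of_nonneg
            (fun n => by split <;> simp [pc_nonneg (by linarith : (0:ℝ) ≤ 2 * a)])
            (hsummable (2 * a) (by linarith) _ inferInstance)] at h3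
        exact (ENNReal.ofReal_eq_ofReal_iff
          (tsum_nonneg fun n => by split <;> simp [pc_nonneg ha.le])
          (tsum_nonneg fun n => by split <;>
            simp [pc_nonneg (by linarith : (0:ℝ) ≤ 2 * a)])).mp h3
      clear_value q
      -- Fourier argument
      set θ : ℝ := 2 * Real.pi / q with hθdef
      set ω : ℂ := Complex.exp (θ * Complex.I) with hωdef
      have hq0 : (q : ℂ) ≠ 0 := Nat.cast_ne_zero.mpr (by omega)
      have hωq : ω ^ q = 1 := by
        rw [hωdef, ← Complex.exp_nat_mul]
        have h4 : (q : ℂ) * (θ * Complex.I) = 2 * Real.pi * Complex.I := by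
          rw [hθdef]
          push_cast
          field_simp
        rw [h4, Complex.exp_two_pi_mul_I]
      have hωmod : ∀ m : ℕ, ω ^ (m % q) = ω ^ m := by
        intro m
        conv_rhs => rw [← Nat.mod_add_div m q]
        rw [pow_add, pow_mul, hωq, one_pow, mul_one]
      have hωabs : ‖ω‖ = 1 := Complex.norm_exp_ofReal_mul_I θ
      have hωre : ω.re = Real.cos θ := Complex.exp_ofReal_mul_I_re θ
      -- generic Fourier sum computation
      have hF : ∀ (lam : ℝ), 0 < lam → ∀ (k' : ℕ),
          (∑ j ∈ Finset.range q,
            ω ^ j * ((∑' n : ℕ, if (n + k') % q = j then pc lam n else 0) : ℝ))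
          = ω ^ k' * Complex.exp (lam * ω - lam) := by
        intro lam hlam k'
        have hsumj : ∀ j : ℕ, Summable (fun n : ℕ =>
            if (n + k') % q = j then (ω ^ j * (pc lam n : ℂ)) else 0) := by
          intro j
          refine Summable.of_norm_bounded (pc_summable lam) (fun n => ?_)
          split
          · rw [norm_mul, norm_pow]
            simp only [hωabs, one_pow, one_mul, Complex.norm_real, Real.norm_eq_abs]
            rw [abs_of_nonneg (pc_nonneg hlam.le n)]
          · simpa using pc_nonneg hlam.le n
        have step1 : (∑ j ∈ Finset.range q,
            ω ^ j * ((∑' n : ℕ, if (n + k') % q = j then pc lam n else 0) : ℝ))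
            = ∑ j ∈ Finset.range q, ∑' n : ℕ,
                if (n + k') % q = j then (ω ^ j * (pc lam n : ℂ)) else 0 := by
          refine Finset.sum_congr rfl fun j _ => ?_
          rw [Complex.ofReal_tsum, ← tsum_mul_left]
          exact tsum_congr fun n => by
            rw [apply_ite Complex.ofReal, Complex.ofReal_zero, mul_ite, mul_zero]
        have step2 : (∑ j ∈ Finset.range q, ∑' n : ℕ,
              if (n + k') % q = j then (ω ^ j * (pc lam n : ℂ)) else 0)
            = ∑' n : ℕ, ∑ j ∈ Finset.range q,
                if (n + k') % q = j then (ω ^ j * (pc lam n : ℂ)) else 0 :=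
          (Summable.tsum_finsetSum fun j _ => hsumj j).symm
        have step3 : ∀ n : ℕ, (∑ j ∈ Finset.range q,
              if (n + k') % q = j then (ω ^ j * (pc lam n : ℂ)) else 0)
            = ω ^ (n + k') * (pc lam n : ℂ) := by
          intro n
          rw [Finset.sum_ite_eq (Finset.range q) ((n + k') % q)
            (fun j => ω ^ j * (pc lam n : ℂ)),
            if_pos (Finset.mem_range.mpr (Nat.mod_lt _ hqpos)), hωmod]
        have step4 : (∑' n : ℕ, ω ^ (n + k') * (pc lam n : ℂ))
            = ω ^ k' * Complex.exp (lam * ω - lam) := by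
          have h5 : ∀ n : ℕ, ω ^ (n + k') * (pc lam n : ℂ)
              = ω ^ k' * ((Real.exp (-lam) : ℂ) * (((lam : ℂ) * ω) ^ n / n.factorial)) := by
            intro n
            unfold pc
            push_cast
            rw [pow_add, mul_pow]
            ring
          rw [tsum_congr h5, tsum_mul_left, tsum_mul_left]
          have h6 : (∑' n : ℕ, ((lam : ℂ) * ω) ^ n / n.factorial)
              = Complex.exp ((lam : ℂ) * ω) := by
            rw [Complex.exp_eq_exp_ℂ, NormedSpace.exp_eq_tsum_div]
          rw [h6, Complex.ofReal_exp, ← Complex.exp_add]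
          push_cast
          ring_nf
        rw [step1, step2, tsum_congr step3, step4]
      -- apply to both sides
      have hLHS := hF a ha 0
      have hRHS := hF (2 * a) (by linarith) k
      have hsum_eq : (∑ j ∈ Finset.range q,
            ω ^ j * ((∑' n : ℕ, if (n + 0) % q = j then pc a n else 0) : ℝ))
          = ∑ j ∈ Finset.range q,
            ω ^ j * ((∑' n : ℕ, if (n + k) % q = j then pc (2 * a) n else 0) : ℝ) := by
        refine Finset.sum_congr rfl fun j hj => ?_
        have hjq : j < q := Finset.mem_range.mp hj
        rw [show (∑' n : ℕ, if (n + 0) % q = j then pc a n else 0)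
            = ∑' n : ℕ, if n % q = j then pc a n else 0 from
          tsum_congr fun n => by rw [Nat.add_zero], h2 j hjq]
      rw [hLHS, hRHS] at hsum_eq
      -- take absolute values
      have habs := congrArg (‖·‖) hsum_eq
      rw [norm_mul, norm_mul, norm_pow, norm_pow, hωabs, one_pow, one_pow, one_mul, one_mul,
        Complex.norm_exp, Complex.norm_exp] at habs
      have hre1 : ((a : ℂ) * ω - a).re = a * Real.cos θ - a := by
        simp [Complex.sub_re, Complex.mul_re, hωre]
      have hre2 : (((2 * a : ℝ) : ℂ) * ω - (2 * a : ℝ)).re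
          = 2 * a * Real.cos θ - 2 * a := by
        simp [Complex.sub_re, Complex.mul_re, hωre]
      rw [hre1, hre2, Real.exp_eq_exp] at habs
      -- contradiction with cos θ < 1
      have hπ := Real.pi_pos
      have hq2R : (2 : ℝ) ≤ (q : ℝ) := by exact_mod_cast hq2
      have hqposR : (0 : ℝ) < (q : ℝ) := by linarith
      have hθpos : 0 < θ := by
        rw [hθdef]
        exact div_pos (by linarith) hqposR
      have hθle : θ ≤ Real.pi := by
        rw [hθdef, div_le_iff₀ hqposR]
        nlinarith
      have hcos : Real.cos θ < 1 := by
        have := Real.cos_lt_cos_of_nonneg_of_le_pi (le_refl 0) hθle hθpos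
        rwa [Real.cos_zero] at this
      nlinarith [habs, hcos, ha]
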